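/- arXiv:1909.13600 — 4 statements merged into one kernel-verified Lean document; each statement's English description precedes it below -/
import Mathlib

section
/- (Case of Lemma 3: overflow only on the right.) Let Δ ≥ 0 and let L, U, ℓ ∈ ℝ with ℓ − Δ ≤ L ≤ ℓ + Δ < U. Then the symbolic loss, which in this case is the distance from the midpoint (ℓ + Δ + U)/2 of the overflowing interval [ℓ + Δ, U] to the tolerance interval, satisfies infDist((ℓ + Δ + U)/2, Icc(ℓ − Δ, ℓ + Δ)) = (1/2)·(e_Δ(L, ℓ) + e_Δ(U, ℓ)). -/
/-- Tolerance error between a prediction `p` and a label `ℓ` with tolerance `Δ`: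
`0` if `|p - ℓ| ≤ Δ`, otherwise the minimum of the distances to the shifted labels. -/
noncomputable def tolErr (Δ p ℓ : ℝ) : ℝ :=
  if |p - ℓ| ≤ Δ then 0 else min |p - (ℓ - Δ)| |p - (ℓ + Δ)|

lemma infDist_Icc_right (a b x : ℝ) (hab : a ≤ b) (hx : b ≤ x) :
    Metric.infDist x (Set.Icc a b) = x - b := by
  apply le_antisymm
  · have := Metric.infDist_le_dist_of_mem (x := x) (y := b)
      (Set.right_mem_Icc.mpr hab)
    rwa [Real.dist_eq, abs_of_nonneg (by linarith)] at this
  · by_contra h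
    push_neg at h
    obtain ⟨y, hy, hlt⟩ := (Metric.infDist_lt_iff (Set.nonempty_Icc.mpr hab)).mp h
    rw [Real.dist_eq] at hlt
    have := hy.2
    rw [abs_of_nonneg (by linarith)] at hlt; linarith

/-- Lemma 3, case: overflow only on the right. -/
theorem symbolic_loss_case_right_overflow (Δ L U ℓ : ℝ) (hΔ : 0 ≤ Δ)
    (h1 : ℓ - Δ ≤ L) (h2 : L ≤ ℓ + Δ) (h3 : ℓ + Δ < U) :
    Metric.infDist ((ℓ + Δ + U) / 2) (Set.Icc (ℓ - Δ) (ℓ + Δ)) =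
      (1 / 2) * (tolErr Δ L ℓ + tolErr Δ U ℓ) := by
  rw [infDist_Icc_right _ _ _ (by linarith) (by linarith)]
  have hL : tolErr Δ L ℓ = 0 := by
    rw [tolErr, if_pos (abs_le.mpr ⟨by linarith, by linarith⟩)]
  have hU : tolErr Δ U ℓ = U - (ℓ + Δ) := by
    rw [tolErr, if_neg (by rw [abs_le]; push_neg; intro; linarith)]
    rw [abs_of_nonneg (by linarith), abs_of_nonneg (by linarith)]
    exact min_eq_right (by linarith)
  rw [hL, hU]; ring
end

section
/- (Case of Lemma 3: overflow only on the left.) Let Δ ≥ 0 and let L, U, ℓ ∈ ℝ with L < ℓ − Δ ≤ U ≤ ℓ + Δ. Then the symbolic loss, which in this case is the distance from the midpoint (L + (ℓ − Δ))/2 of the overflowing interval [L, ℓ − Δ] to the tolerance interval, satisfies infDist((L + (ℓ − Δ))/2, Icc(ℓ − Δ, ℓ + Δ)) = (1/2)·(e_Δ(L, ℓ) + e_Δ(U, ℓ)). -/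
lemma infDist_Icc_left (x a b : ℝ) (hx : x ≤ a) (hab : a ≤ b) :
    Metric.infDist x (Set.Icc a b) = a - x := by
  have hne : (Set.Icc a b).Nonempty := Set.nonempty_Icc.2 hab
  apply le_antisymm
  · have := Metric.infDist_le_dist_of_mem (x := x) (Set.left_mem_Icc.2 hab)
    rw [Real.dist_eq, abs_of_nonpos (by linarith)] at this
    linarith
  · by_contra h
    push_neg at h
    obtain ⟨y, hy, hd⟩ := (Metric.infDist_lt_iff hne).1 h
    rw [Real.dist_eq] at hd
    have : a - x ≤ |x - y| := le_abs.2 (Or.inr (by have := hy.1; linarith))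
    linarith

/-- Lemma 3, case: overflow only on the left. -/
theorem symbolic_loss_case_left_overflow (Δ L U ℓ : ℝ) (hΔ : 0 ≤ Δ)
    (h1 : L < ℓ - Δ) (h2 : ℓ - Δ ≤ U) (h3 : U ≤ ℓ + Δ) :
    Metric.infDist ((L + (ℓ - Δ)) / 2) (Set.Icc (ℓ - Δ) (ℓ + Δ)) =
      (1 / 2) * (tolErr Δ L ℓ + tolErr Δ U ℓ) := by
  rw [infDist_Icc_left _ _ _ (by linarith) (by linarith)]
  unfold tolErr
  rw [if_neg (by rw [abs_le]; push_neg; intro h; linarith),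
      if_pos (by rw [abs_le]; constructor <;> linarith)]
  rw [abs_of_nonpos (by linarith), abs_of_nonpos (by linarith)]
  rw [min_eq_left (by linarith)]
  ring
end

section
/- (Case of Lemma 3: output bound entirely to the right of the tolerance interval.) Let Δ ≥ 0 and let L, U, ℓ ∈ ℝ with ℓ + Δ < L ≤ U. Then the symbolic loss, which in this case is the distance from the midpoint (L + U)/2 of the whole interval [L, U] to the tolerance interval, satisfies infDist((L + U)/2, Icc(ℓ − Δ, ℓ + Δ)) = (1/2)·(e_Δ(L, ℓ) + e_Δ(U, ℓ)). -/
/-- Lemma 3, case: output bound entirely to the right of the tolerance interval. -/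
theorem symbolic_loss_case_all_right (Δ L U ℓ : ℝ) (hΔ : 0 ≤ Δ)
    (h1 : ℓ + Δ < L) (h2 : L ≤ U) :
    Metric.infDist ((L + U) / 2) (Set.Icc (ℓ - Δ) (ℓ + Δ)) =
      (1 / 2) * (tolErr Δ L ℓ + tolErr Δ U ℓ) := by
  rw [infDist_Icc_right _ _ _ (by linarith) (by linarith)]
  unfold tolErr
  rw [if_neg (by rw [abs_le]; push_neg; intro h; linarith),
      if_neg (by rw [abs_le]; push_neg; intro h; linarith)]
  rw [abs_of_nonneg (by linarith), abs_of_nonneg (by linarith),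
      abs_of_nonneg (by linarith), abs_of_nonneg (by linarith)]
  rw [min_eq_right (by linarith), min_eq_right (by linarith)]
  ring
end

section
/- (Lemma 5, single data point version.) Let h : (Fin m → ℝ) → (Fin d → ℝ) be any function (the composition of the network layers from layer l̃ to the output layer), let fv : Fin m → ℝ be a feature vector, κ ≥ 0 a perturbation amount, Δ : Fin d → ℝ a tolerance with Δ j ≥ 0 for all j, ℓ : Fin d → ℝ a label, and L, U : Fin d → ℝ an output bound. Assume (soundness) for every v : Fin m → ℝ with |v i − fv i| ≤ κ for all i, one has L j ≤ h(v) j ≤ U j for all j; and (zero symbolic loss) for every j, (1/2)·(e_{Δ j}(L j, ℓ j) + e_{Δ j}(U j, ℓ j)) = 0. Then for every fv' : Fin m → ℝ with |fv' i − fv i| ≤ κ for all i, the output satisfies ℓ j − Δ j ≤ h(fv') j ≤ ℓ j + Δ j for all j. -/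
lemma tolErr_nonneg (Δ p ℓ : ℝ) : 0 ≤ tolErr Δ p ℓ := by
  unfold tolErr
  split
  · exact le_refl 0
  · exact le_min (abs_nonneg _) (abs_nonneg _)

lemma tolErr_eq_zero (Δ p ℓ : ℝ) (hΔ : 0 ≤ Δ) (h0 : tolErr Δ p ℓ = 0) :
    |p - ℓ| ≤ Δ := by
  unfold tolErr at h0
  by_contra hc
  rw [if_neg hc] at h0
  rcases min_eq_iff.mp h0 with ⟨h1, _⟩ | ⟨h1, _⟩
  · have : p = ℓ - Δ := by have := abs_eq_zero.mp h1; linarith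
    apply hc; rw [this]; ring_nf; rw [abs_neg, abs_of_nonneg hΔ]
  · have : p = ℓ + Δ := by have := abs_eq_zero.mp h1; linarith
    apply hc; rw [this]; ring_nf; rw [abs_of_nonneg hΔ]

/-- Lemma 5 (single data point): zero symbolic loss of a sound output bound guarantees
that any feature-level perturbation bounded by `κ` produces output within tolerance. -/
theorem provable_robustness_single (m d : ℕ)
    (h : (Fin m → ℝ) → (Fin d → ℝ)) (fv : Fin m → ℝ) (κ : ℝ) (hκ : 0 ≤ κ)
    (Δ : Fin d → ℝ) (hΔ : ∀ j, 0 ≤ Δ j) (ℓ : Fin d → ℝ) (L U : Fin d → ℝ)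
    (hsound : ∀ v : Fin m → ℝ, (∀ i, |v i - fv i| ≤ κ) →
      ∀ j, L j ≤ h v j ∧ h v j ≤ U j)
    (hloss : ∀ j, (1 / 2) * (tolErr (Δ j) (L j) (ℓ j) + tolErr (Δ j) (U j) (ℓ j)) = 0) :
    ∀ fv' : Fin m → ℝ, (∀ i, |fv' i - fv i| ≤ κ) →
      ∀ j, ℓ j - Δ j ≤ h fv' j ∧ h fv' j ≤ ℓ j + Δ j := by
  intro fv' hpert j
  have h1 := tolErr_nonneg (Δ j) (L j) (ℓ j)
  have h2 := tolErr_nonneg (Δ j) (U j) (ℓ j)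
  have hsum := hloss j
  have hL0 : tolErr (Δ j) (L j) (ℓ j) = 0 := by linarith
  have hU0 : tolErr (Δ j) (U j) (ℓ j) = 0 := by linarith
  have hL := abs_le.mp (tolErr_eq_zero _ _ _ (hΔ j) hL0)
  have hU := abs_le.mp (tolErr_eq_zero _ _ _ (hΔ j) hU0)
  obtain ⟨hl, hu⟩ := hsound fv' hpert j
  constructor <;> linarith [hL.1, hU.2]
end
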